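/- arXiv:1907.12098 — 8 statements merged into one kernel-verified Lean document; each statement's English description precedes it below -/
import Mathlib

section
/- Let f, g be surjective continuous maps on a compact metric space X and let α : X → I be a surjective map to a finite set. If g^α ⊆ f^α then d(f,g) ≤ mesh(A^α) + mesh(f A^α), where d is the sup metric. -/
theorem dist_le_mesh_add_mesh {X : Type*} [MetricSpace X] [CompactSpace X]
    {I : Type*} [Finite I] (f g : X → X)
    (hf : Continuous f) (hg : Continuous g)
    (hfs : Function.Surjective f) (hgs : Function.Surjective g)
    (α : X → I) (hα : Function.Surjective α)
    (hsub : ∀ x : X, ∃ y : X, α y = α x ∧ α (f y) = α (g x)) :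
    ⨆ x : X, dist (f x) (g x) ≤
      (⨆ i : I, Metric.diam (α ⁻¹' {i})) +
        ⨆ i : I, Metric.diam (f '' (α ⁻¹' {i})) := by
  have hb1 : BddAbove (Set.range fun i : I => Metric.diam (α ⁻¹' {i})) :=
    (Set.finite_range _).bddAbove
  have hb2 : BddAbove (Set.range fun i : I => Metric.diam (f '' (α ⁻¹' {i}))) :=
    (Set.finite_range _).bddAbove
  rcases isEmpty_or_nonempty X with hX | hX
  · rw [Real.iSup_of_isEmpty]
    exact add_nonneg (Real.iSup_nonneg fun i => Metric.diam_nonneg)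
      (Real.iSup_nonneg fun i => Metric.diam_nonneg)
  apply ciSup_le
  intro x
  obtain ⟨y, hy1, hy2⟩ := hsub x
  have h1 : dist (f x) (g x) ≤ dist (f x) (f y) + dist (f y) (g x) := dist_triangle _ _ _
  have h2 : dist (f x) (f y) ≤ Metric.diam (f '' (α ⁻¹' {α x})) := by
    apply Metric.dist_le_diam_of_mem
    · exact isCompact_univ.isBounded.subset (Set.subset_univ _)
    · exact ⟨x, rfl, rfl⟩
    · exact ⟨y, hy1, rfl⟩
  have h3 : dist (f y) (g x) ≤ Metric.diam (α ⁻¹' {α (g x)}) := by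
    apply Metric.dist_le_diam_of_mem
    · exact isCompact_univ.isBounded.subset (Set.subset_univ _)
    · exact hy2
    · exact rfl
  calc dist (f x) (g x) ≤ Metric.diam (α ⁻¹' {α (g x)}) + Metric.diam (f '' (α ⁻¹' {α x})) := by
        linarith
    _ ≤ _ := add_le_add (le_ciSup hb1 _) (le_ciSup hb2 _)
end

section
/- If N and M are relatively prime positive integers, then the N-M wedge relation is mixing: there exists a positive integer K such that for every L ≥ K and every pair of vertices i, j of the wedge there is a path of length exactly L from i to j. -/
/-- `n`-fold relational composition. -/
def relPow {α : Type*} (R : α → α → Prop) : ℕ → α → α → Prop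
  | 0 => Eq
  | n + 1 => fun a c => ∃ b, R a b ∧ relPow R n b c

/-- The `N`-`M` wedge relation on `{1, …, N+M-1} ⊆ ℕ`: two loops of lengths `N` and `M`
sharing the vertex `N`. -/
def wedgeRel (N M : ℕ) (i j : ℕ) : Prop :=
  (1 ≤ i ∧ i ≤ N + M - 2 ∧ j = i + 1) ∨ (i = N ∧ j = 1) ∨ (i = N + M - 1 ∧ j = N)

lemma relPow_add {α : Type*} (R : α → α → Prop) :
    ∀ (a b : ℕ) (x y z : α), relPow R a x y → relPow R b y z → relPow R (a + b) x z := by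
  intro a
  induction a with
  | zero =>
    intro b x y z h1 h2
    have hxy : x = y := h1
    simpa [hxy] using h2
  | succ n ih =>
    intro b x y z h1 h2
    obtain ⟨w, hw, hrest⟩ := h1
    have : n + 1 + b = (n + b) + 1 := by omega
    rw [this]
    exact ⟨w, hw, ih b w y z hrest h2⟩

lemma relPow_mul {α : Type*} (R : α → α → Prop) (n : ℕ) (x : α) (hx : relPow R n x x) :
    ∀ a : ℕ, relPow R (a * n) x x := by
  intro a
  induction a with
  | zero => rw [Nat.zero_mul]; rfl
  | succ m ih =>
    have : (m + 1) * n = m * n + n := by ring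
    rw [this]
    exact relPow_add R (m * n) n x x x ih hx

/-- Walking along the chain `a → a+1 → ⋯ → a+k`. -/
lemma wedge_chain (N M : ℕ) :
    ∀ (k a : ℕ), 1 ≤ a → a + k ≤ N + M - 1 → relPow (wedgeRel N M) k a (a + k) := by
  intro k
  induction k with
  | zero => intro a _ _; rfl
  | succ n ih =>
    intro a ha hak
    refine ⟨a + 1, Or.inl ⟨ha, by omega, rfl⟩, ?_⟩
    have := ih (a + 1) (by omega) (by omega)
    have heq : a + 1 + n = a + (n + 1) := by omega
    rwa [heq] at this

/-- The loop of length `N` at vertex `N`. -/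
lemma wedge_loopN (N M : ℕ) (hN : 1 ≤ N) (hM : 1 ≤ M) :
    relPow (wedgeRel N M) N N N := by
  have hstep : wedgeRel N M N 1 := Or.inr (Or.inl ⟨rfl, rfl⟩)
  have hchain := wedge_chain N M (N - 1) 1 le_rfl (by omega)
  have h1 : (1 : ℕ) + (N - 1) = N := by omega
  rw [h1] at hchain
  have := relPow_add (wedgeRel N M) 1 (N - 1) N 1 N ⟨1, hstep, rfl⟩ hchain
  have h2 : 1 + (N - 1) = N := by omega
  rwa [h2] at this

/-- The loop of length `M` at vertex `N`. -/
lemma wedge_loopM (N M : ℕ) (hN : 1 ≤ N) (hM : 1 ≤ M) :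
    relPow (wedgeRel N M) M N N := by
  have hchain := wedge_chain N M (M - 1) N hN (by omega)
  have hstep : wedgeRel N M (N + (M - 1)) N := Or.inr (Or.inr ⟨by omega, rfl⟩)
  have := relPow_add (wedgeRel N M) (M - 1) 1 N (N + (M - 1)) N hchain ⟨N, hstep, rfl⟩
  have h2 : (M - 1) + 1 = M := by omega
  rwa [h2] at this

/-- Every `t ≥ (N-1)(M-1)` is a nonnegative combination of coprime `N`, `M`. -/
lemma chicken (N M : ℕ) (hN : 1 ≤ N) (hM : 1 ≤ M) (h : Nat.Coprime N M)
    (t : ℕ) (ht : (N - 1) * (M - 1) ≤ t) : ∃ a b : ℕ, a * N + b * M = t := by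
  haveI : NeZero N := ⟨by omega⟩
  set b : ℕ := ((t : ZMod N) * (M : ZMod N)⁻¹).val with hb
  have hbN : b < N := ZMod.val_lt _
  have hunit : IsUnit (M : ZMod N) := by
    rw [ZMod.isUnit_iff_coprime]
    exact h.symm
  have hcast : ((b : ℕ) : ZMod N) * (M : ZMod N) = (t : ZMod N) := by
    rw [hb, ZMod.natCast_val, ZMod.cast_id]
    rw [mul_assoc, ZMod.inv_mul_of_unit _ hunit, mul_one]
  have hdvd : (N : ℤ) ∣ (t : ℤ) - (b : ℤ) * (M : ℤ) := by
    rw [← ZMod.intCast_zmod_eq_zero_iff_dvd]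
    push_cast
    rw [hcast]
    ring
  obtain ⟨k, hk⟩ := hdvd
  -- lower bound: t - b*M ≥ -(N-1)
  have hlb : (t : ℤ) - (b : ℤ) * (M : ℤ) ≥ -((N : ℤ) - 1) := by
    have h1 : (b : ℤ) ≤ (N : ℤ) - 1 := by exact_mod_cast Nat.le_sub_one_of_lt hbN
    have h2 : ((N : ℤ) - 1) * ((M : ℤ) - 1) ≤ (t : ℤ) := by
      have h3 := ht
      zify [hN, hM] at h3
      exact h3
    have hMpos : (1 : ℤ) ≤ (M : ℤ) := by exact_mod_cast hM
    nlinarith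
  have hk0 : 0 ≤ k := by
    by_contra hneg
    push_neg at hneg
    have : k ≤ -1 := by omega
    have hNpos : (0 : ℤ) < (N : ℤ) := by exact_mod_cast (by omega : 0 < N)
    nlinarith [hk, hlb]
  refine ⟨k.toNat, b, ?_⟩
  have : ((k.toNat * N + b * M : ℕ) : ℤ) = (t : ℤ) := by
    push_cast
    rw [Int.toNat_of_nonneg hk0]
    linarith [hk]
  exact_mod_cast this

theorem wedge_mixing (N M : ℕ) (hN : 1 ≤ N) (hM : 1 ≤ M) (h : Nat.Coprime N M) :
    ∃ K : ℕ, 1 ≤ K ∧ ∀ L, L ≥ K → ∀ i j : ℕ,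
      1 ≤ i → i ≤ N + M - 1 → 1 ≤ j → j ≤ N + M - 1 →
        relPow (wedgeRel N M) L i j := by
  refine ⟨(N - 1) * (M - 1) + 2 * (N + M) + 1, by omega, ?_⟩
  intro L hL i j hi1 hi2 hj1 hj2
  -- distance from i to N
  set d : ℕ := if i ≤ N then N - i else N + M - i with hd
  have htoN : relPow (wedgeRel N M) d i N := by
    by_cases hc : i ≤ N
    · have := wedge_chain N M (N - i) i hi1 (by omega)
      have heq : i + (N - i) = N := by omega
      rw [heq] at this
      simpa [hd, hc] using this
    · push_neg at hc
      have hchain := wedge_chain N M (N + M - 1 - i) i hi1 (by omega)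
      have hstep : wedgeRel N M (i + (N + M - 1 - i)) N := Or.inr (Or.inr ⟨by omega, rfl⟩)
      have := relPow_add (wedgeRel N M) (N + M - 1 - i) 1 i (i + (N + M - 1 - i)) N
        hchain ⟨N, hstep, rfl⟩
      have heq : (N + M - 1 - i) + 1 = N + M - i := by omega
      rw [heq] at this
      simpa [hd, hc, not_le.mpr hc] using this
  -- distance from N to j
  set e : ℕ := if j ≤ N then j else j - N with he
  have hfromN : relPow (wedgeRel N M) e N j := by
    by_cases hc : j ≤ N
    · have hstep : wedgeRel N M N 1 := Or.inr (Or.inl ⟨rfl, rfl⟩)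
      have hchain := wedge_chain N M (j - 1) 1 le_rfl (by omega)
      have heq : (1 : ℕ) + (j - 1) = j := by omega
      rw [heq] at hchain
      have := relPow_add (wedgeRel N M) 1 (j - 1) N 1 j ⟨1, hstep, rfl⟩ hchain
      have heq2 : 1 + (j - 1) = j := by omega
      rw [heq2] at this
      simpa [he, hc] using this
    · push_neg at hc
      have hchain := wedge_chain N M (j - N) N hN (by omega)
      have heq : N + (j - N) = j := by omega
      rw [heq] at hchain
      simpa [he, not_le.mpr hc] using hchain
  have hdle : d ≤ N + M := by rw [hd]; split <;> omega
  have hele : e ≤ N + M := by rw [he]; split <;> omega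
  set t : ℕ := L - d - e with htdef
  have htge : (N - 1) * (M - 1) ≤ t := by omega
  obtain ⟨a, b, hab⟩ := chicken N M hN hM h t htge
  have hloopA : relPow (wedgeRel N M) (a * N) N N :=
    relPow_mul _ N N (wedge_loopN N M hN hM) a
  have hloopB : relPow (wedgeRel N M) (b * M) N N :=
    relPow_mul _ M N (wedge_loopM N M hN hM) b
  have hmid : relPow (wedgeRel N M) t N N := by
    have := relPow_add (wedgeRel N M) (a * N) (b * M) N N N hloopA hloopB
    rwa [hab] at this
  have h1 := relPow_add (wedgeRel N M) d t i N N htoN hmid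
  have h2 := relPow_add (wedgeRel N M) (d + t) e i N j h1 hfromN
  have heq : d + t + e = L := by omega
  rwa [heq] at h2
end

section
/- For positive integers N, M with gcd(N,M) = 1, there exists K such that for every L ≥ K the N-M wedge is a factor of the loop of length L: there is a surjective map of systems from the L-loop onto the N-M wedge. -/
lemma succ_mod (n x : ℕ) (hn : 0 < n) :
    ((x + 1) % n = x % n + 1 ∧ x % n + 1 < n) ∨ ((x + 1) % n = 0 ∧ x % n = n - 1) := by
  have h := Nat.div_add_mod x n
  have h2 := Nat.mod_lt x hn
  rcases Nat.lt_or_ge (x % n + 1) n with h3 | h3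
  · left
    refine ⟨?_, h3⟩
    conv_lhs => rw [← h, Nat.add_assoc]
    rw [Nat.mul_add_mod, Nat.mod_eq_of_lt h3]
  · right
    have h4 : x % n + 1 = n := by omega
    constructor
    · conv_lhs => rw [← h, Nat.add_assoc, h4]
      rw [Nat.add_mod_right, Nat.mul_mod_right]
    · omega

/-- The walk around the loop of length `a*N + b*M`: go `a` times around the
`N`-cycle of the wedge, then `b` times around the `M`-cycle. -/
def wedgeWalk (N M a t : ℕ) : ℕ :=
  if t < a * N then t % N + 1 else N + (t + 1 - a * N) % M

lemma wedgeWalk_bounds (N M a t : ℕ) (hN : 1 ≤ N) (hM : 1 ≤ M) :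
    1 ≤ wedgeWalk N M a t ∧ wedgeWalk N M a t ≤ N + M - 1 := by
  unfold wedgeWalk
  split
  · have := Nat.mod_lt t (show 0 < N by omega)
    omega
  · have := Nat.mod_lt (t + 1 - a * N) (show 0 < M by omega)
    omega

lemma wedgeWalk_step (N M a b L : ℕ) (hN : 1 ≤ N) (hM : 1 ≤ M) (ha : 1 ≤ a) (hb : 2 ≤ b)
    (hL : L = a * N + b * M) (t : ℕ) (ht : t < L) :
    wedgeRel N M (wedgeWalk N M a t) (wedgeWalk N M a ((t + 1) % L)) := by
  have hbM : 2 ≤ b * M := le_trans (by omega) (Nat.mul_le_mul hb hM)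
  have hNa : N ≤ a * N := Nat.le_mul_of_pos_left N (by omega)
  by_cases h1 : t + 1 < a * N
  · have hm : (t + 1) % L = t + 1 := Nat.mod_eq_of_lt (by omega)
    rw [hm]
    unfold wedgeWalk
    rw [if_pos (by omega), if_pos h1]
    rcases succ_mod N t (by omega) with ⟨e1, e2⟩ | ⟨e1, e2⟩ <;> rw [e1] <;> unfold wedgeRel <;> omega
  · by_cases h2 : t < a * N
    · -- t + 1 = a * N
      have ht1 : t + 1 = a * N := by omega
      obtain ⟨a', rfl⟩ : ∃ a', a = a' + 1 := ⟨a - 1, by omega⟩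
      have hm : (t + 1) % L = t + 1 := Nat.mod_eq_of_lt (by omega)
      rw [hm]
      unfold wedgeWalk
      rw [if_pos h2, if_neg (by omega)]
      have htv : t = N - 1 + a' * N := by
        have : (a' + 1) * N = a' * N + N := by ring
        omega
      have e1 : t % N = N - 1 := by
        rw [htv, Nat.add_mul_mod_self_right, Nat.mod_eq_of_lt (by omega)]
      have e2 : (t + 1 + 1 - (a' + 1) * N) % M = 1 % M := by
        rw [show t + 1 + 1 - (a' + 1) * N = 1 by omega]
      rcases Nat.lt_or_ge 1 M with hM2 | hM2
      · rw [e1, e2, Nat.mod_eq_of_lt hM2]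
        unfold wedgeRel; omega
      · have hM1 : M = 1 := by omega
        rw [e1, e2, hM1]
        unfold wedgeRel; omega
    · -- second branch: t ≥ a*N
      have h3 : a * N ≤ t := by omega
      by_cases h4 : t + 1 < L
      · have hm : (t + 1) % L = t + 1 := Nat.mod_eq_of_lt h4
        rw [hm]
        unfold wedgeWalk
        rw [if_neg (by omega), if_neg (by omega)]
        have hx : t + 1 + 1 - a * N = (t + 1 - a * N) + 1 := by omega
        rw [hx]
        have hr := Nat.mod_lt (t + 1 - a * N) (show 0 < M by omega)
        rcases succ_mod M (t + 1 - a * N) (by omega) with ⟨e1, e2⟩ | ⟨e1, e2⟩ <;> rw [e1] <;>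
          unfold wedgeRel <;> omega
      · -- t + 1 = L : wrap to 0
        have ht1 : t + 1 = L := by omega
        have hm : (t + 1) % L = 0 := by rw [ht1, Nat.mod_self]
        rw [hm]
        unfold wedgeWalk
        rw [if_neg (by omega), if_pos (by omega)]
        have e1 : (t + 1 - a * N) % M = 0 := by
          rw [show t + 1 - a * N = b * M by omega, Nat.mul_mod_left]
        have e2 : 0 % N = 0 := Nat.zero_mod N
        rw [e1, e2]
        unfold wedgeRel; omega

lemma wedgeWalk_surj (N M a b L : ℕ) (hN : 1 ≤ N) (hM : 1 ≤ M) (ha : 1 ≤ a) (hb : 2 ≤ b)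
    (hL : L = a * N + b * M) (i j : ℕ) (hij : wedgeRel N M i j) :
    ∃ t, t < L ∧ wedgeWalk N M a t = i ∧ wedgeWalk N M a ((t + 1) % L) = j := by
  have hbM : 2 ≤ b * M := le_trans (by omega) (Nat.mul_le_mul hb hM)
  have hMbM : 2 * M ≤ b * M := Nat.mul_le_mul_right M hb
  have hNa : N ≤ a * N := Nat.le_mul_of_pos_left N (by omega)
  rcases hij with ⟨hi1, hi2, hj⟩ | ⟨hi, hj⟩ | ⟨hi, hj⟩
  · -- edge (i, i+1)
    rcases Nat.lt_or_ge i N with hiN | hiN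
    · -- 1 ≤ i ≤ N-1
      refine ⟨i - 1, by omega, ?_, ?_⟩
      · unfold wedgeWalk
        rw [if_pos (by omega), Nat.mod_eq_of_lt (by omega)]
        omega
      · rw [Nat.mod_eq_of_lt (by omega)]
        unfold wedgeWalk
        rw [if_pos (by omega), show i - 1 + 1 = i by omega, Nat.mod_eq_of_lt hiN]
        omega
    · -- N ≤ i ≤ N+M-2, so M ≥ 2
      have hM2 : 2 ≤ M := by omega
      rcases Nat.eq_or_lt_of_le hiN with hr0 | hr1
      · -- i = N : t = a*N + (M-1)
        refine ⟨a * N + (M - 1), by omega, ?_, ?_⟩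
        · unfold wedgeWalk
          rw [if_neg (by omega), show a * N + (M - 1) + 1 - a * N = M by omega, Nat.mod_self]
          omega
        · rw [Nat.mod_eq_of_lt (by omega)]
          unfold wedgeWalk
          rw [if_neg (by omega), show a * N + (M - 1) + 1 + 1 - a * N = M + 1 by omega,
            Nat.add_mod_left, Nat.mod_eq_of_lt hM2]
          omega
      · -- i ≥ N+1 : t = a*N + (i-N-1)
        refine ⟨a * N + (i - N - 1), by omega, ?_, ?_⟩
        · unfold wedgeWalk
          rw [if_neg (by omega), show a * N + (i - N - 1) + 1 - a * N = i - N by omega,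
            Nat.mod_eq_of_lt (by omega)]
          omega
        · rw [Nat.mod_eq_of_lt (by omega)]
          unfold wedgeWalk
          rw [if_neg (by omega), show a * N + (i - N - 1) + 1 + 1 - a * N = i - N + 1 by omega,
            Nat.mod_eq_of_lt (by omega)]
          omega
  · -- edge (N, 1) : t = L - 1
    refine ⟨L - 1, by omega, ?_, ?_⟩
    · unfold wedgeWalk
      rw [if_neg (by omega), show L - 1 + 1 - a * N = b * M by omega, Nat.mul_mod_left]
      omega
    · rw [show L - 1 + 1 = L by omega, Nat.mod_self]
      unfold wedgeWalk
      rw [if_pos (by omega), Nat.zero_mod]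
      omega
  · -- edge (N+M-1, N)
    rcases Nat.lt_or_ge 1 M with hM2 | hM1
    · -- M ≥ 2 : t = a*N + (M-2)
      refine ⟨a * N + (M - 2), by omega, ?_, ?_⟩
      · unfold wedgeWalk
        rw [if_neg (by omega), show a * N + (M - 2) + 1 - a * N = M - 1 by omega,
          Nat.mod_eq_of_lt (by omega)]
        omega
      · rw [Nat.mod_eq_of_lt (by omega)]
        unfold wedgeWalk
        rw [if_neg (by omega), show a * N + (M - 2) + 1 + 1 - a * N = M by omega, Nat.mod_self]
        omega
    · -- M = 1 : t = a*N
      have hM1' : M = 1 := by omega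
      refine ⟨a * N, by omega, ?_, ?_⟩
      · unfold wedgeWalk
        rw [if_neg (by omega), show a * N + 1 - a * N = 1 by omega, hM1', Nat.mod_self]
        omega
      · rw [Nat.mod_eq_of_lt (by omega)]
        unfold wedgeWalk
        rw [if_neg (by omega), show a * N + 1 + 1 - a * N = 2 by omega, hM1']
        omega

lemma rep_lemma (N M : ℕ) (hN : 1 ≤ N) (hM : 1 ≤ M) (h : Nat.Coprime N M) (L : ℕ)
    (hL : 2 * N * M + N + 2 * M ≤ L) :
    ∃ a b, 1 ≤ a ∧ 2 ≤ b ∧ L = a * N + b * M := by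
  haveI : NeZero M := ⟨by omega⟩
  have hunit : IsUnit (N : ZMod M) := (ZMod.isUnit_iff_coprime N M).mpr h
  set u : ZMod M := (L : ZMod M) * (N : ZMod M)⁻¹ with hu
  have hcN : ((u.val * N : ℕ) : ZMod M) = ((L : ℕ) : ZMod M) := by
    push_cast
    rw [ZMod.natCast_val, ZMod.cast_id, hu, mul_assoc, ZMod.inv_mul_of_unit _ hunit, mul_one]
  have hmod : u.val * N ≡ L [MOD M] := (ZMod.natCast_eq_natCast_iff _ _ _).mp hcN
  set a := u.val + M with hadef
  have hvlt : u.val < M := ZMod.val_lt u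
  have hamod : a * N % M = L % M := by
    have : a * N = u.val * N + M * N := by rw [hadef]; ring
    rw [this, Nat.add_mul_mod_self_left]
    exact hmod
  have haN : a * N ≤ 2 * N * M - N := by
    have h1 : a * N ≤ (2 * M - 1) * N := Nat.mul_le_mul_right N (by omega)
    have h2 : (2 * M - 1) * N = 2 * M * N - N := by rw [Nat.sub_mul, one_mul]
    have h3 : 2 * M * N = 2 * N * M := by ring
    omega
  have hNle : N ≤ 2 * N * M := by nlinarith
  have hle : a * N + 2 * M + N ≤ L := by omega
  have hdvd : M ∣ L - a * N := (Nat.modEq_iff_dvd' (by omega)).mp hamod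
  obtain ⟨c, hc⟩ := hdvd
  have hc2 : 2 ≤ c := by
    rcases Nat.lt_or_ge c 2 with h1 | h1
    · have : M * c ≤ M * 1 := Nat.mul_le_mul_left M (by omega)
      omega
    · exact h1
  exact ⟨a, c, by omega, hc2, by have : M * c = c * M := by ring
                                 omega⟩

theorem wedge_factor_of_long_loops (N M : ℕ) (hN : 1 ≤ N) (hM : 1 ≤ M)
    (h : Nat.Coprime N M) :
    ∃ K : ℕ, 1 ≤ K ∧ ∀ L, L ≥ K → ∃ p : ZMod L → ℕ,
      (∀ k : ZMod L, 1 ≤ p k ∧ p k ≤ N + M - 1) ∧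
      (∀ k : ZMod L, wedgeRel N M (p k) (p (k + 1))) ∧
      (∀ i j : ℕ, wedgeRel N M i j → ∃ k : ZMod L, p k = i ∧ p (k + 1) = j) := by
  refine ⟨2 * N * M + N + 2 * M, by omega, ?_⟩
  intro L hLK
  obtain ⟨a, b, ha, hb, hLab⟩ := rep_lemma N M hN hM h L hLK
  haveI : NeZero L := ⟨by omega⟩
  haveI : Fact (1 < L) := ⟨by omega⟩
  refine ⟨fun k => wedgeWalk N M a k.val, ?_, ?_, ?_⟩
  · intro k
    exact wedgeWalk_bounds N M a k.val hN hM
  · intro k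
    have hv : (k + 1).val = (k.val + 1) % L := by
      rw [ZMod.val_add, ZMod.val_one]
    show wedgeRel N M (wedgeWalk N M a k.val) (wedgeWalk N M a (k + 1).val)
    rw [hv]
    exact wedgeWalk_step N M a b L hN hM ha hb hLab k.val (ZMod.val_lt k)
  · intro i j hij
    obtain ⟨t, ht, h1, h2⟩ := wedgeWalk_surj N M a b L hN hM ha hb hLab i j hij
    refine ⟨(t : ZMod L), ?_, ?_⟩
    · show wedgeWalk N M a (t : ZMod L).val = i
      rw [ZMod.val_natCast_of_lt ht]
      exact h1
    · show wedgeWalk N M a ((t : ZMod L) + 1).val = j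
      rw [ZMod.val_add, ZMod.val_one, ZMod.val_natCast_of_lt ht]
      exact h2
end

section
/- Every transitive surjective relation φ on a nonempty finite set I is a factor of a single loop: there exist N ≥ 1 and a surjective map p : ℤ/Nℤ → I such that (p(k), p(k+1)) ∈ φ for all k and every pair in φ arises as some (p(k), p(k+1)). -/
lemma relPow_chain {α : Type*} {R : α → α → Prop} :
    ∀ (n : ℕ) {i j : α}, relPow R n i j →
      (n = 0 ∧ i = j) ∨ ∃ l : List α, List.Chain R i (l ++ [j])
  | 0, i, j, h => Or.inl ⟨rfl, h⟩
  | n + 1, i, j, h => by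
    obtain ⟨b, hib, hb⟩ := h
    rcases relPow_chain n hb with ⟨-, rfl⟩ | ⟨l, hl⟩
    · exact Or.inr ⟨[], List.isChain_cons_cons.mpr ⟨hib, List.isChain_singleton _⟩⟩
    · exact Or.inr ⟨b :: l, List.isChain_cons_cons.mpr ⟨hib, hl⟩⟩

theorem transitive_rel_factor_of_loop {I : Type*} [Finite I] [Nonempty I]
    (φ : I → I → Prop)
    (hl : ∀ i : I, ∃ j, φ i j) (hr : ∀ j : I, ∃ i, φ i j)
    (htrans : ∀ i j : I, ∃ n, 1 ≤ n ∧ relPow φ n i j) :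
    ∃ N : ℕ, 1 ≤ N ∧ ∃ p : ZMod N → I,
      Function.Surjective p ∧
      (∀ k : ZMod N, φ (p k) (p (k + 1))) ∧
      (∀ i j : I, φ i j → ∃ k : ZMod N, p k = i ∧ p (k + 1) = j) := by
  classical
  have := Fintype.ofFinite I
  -- path lemma
  have pathTo : ∀ i j : I, ∃ l : List I, List.Chain φ i (l ++ [j]) := by
    intro i j
    obtain ⟨n, hn1, hn⟩ := htrans i j
    obtain ⟨m, rfl⟩ : ∃ m, n = m + 1 := ⟨n - 1, by omega⟩
    obtain ⟨b, hib, hb⟩ := hn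
    rcases relPow_chain m hb with ⟨-, rfl⟩ | ⟨l, hlc⟩
    · exact ⟨[], List.isChain_cons_cons.mpr ⟨hib, List.isChain_singleton _⟩⟩
    · exact ⟨b :: l, List.isChain_cons_cons.mpr ⟨hib, hlc⟩⟩
  obtain ⟨x0⟩ := ‹Nonempty I›
  -- build walk covering given edge list
  have build : ∀ es : List (I × I), (∀ e ∈ es, φ e.1 e.2) → ∀ a : I,
      ∃ T : List I, List.Chain φ a (T ++ [x0]) ∧
        ∀ e ∈ es, ∃ l1 l2 : List I, a :: (T ++ [x0]) = l1 ++ e.1 :: e.2 :: l2 := by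
    intro es
    induction es with
    | nil => intro _ a; obtain ⟨T, hT⟩ := pathTo a x0; exact ⟨T, hT, by simp⟩
    | cons e rest ih =>
      intro hes a
      obtain ⟨u, v⟩ := e
      have huv : φ u v := hes (u, v) List.mem_cons_self
      obtain ⟨l1, hl1⟩ := pathTo a u
      obtain ⟨T2, hT2, hinf⟩ := ih (fun e he => hes e (by simp [he])) v
      refine ⟨l1 ++ u :: v :: T2, ?_, ?_⟩
      · rw [show l1 ++ u :: v :: T2 ++ [x0] = l1 ++ u :: (v :: (T2 ++ [x0])) by simp]
        show List.IsChain φ (a :: (l1 ++ u :: (v :: (T2 ++ [x0]))))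
        rw [List.isChain_cons_split]
        exact ⟨hl1, List.Chain.cons huv hT2⟩
      · intro e he
        rcases List.mem_cons.mp he with rfl | he
        · exact ⟨a :: l1, T2 ++ [x0], by simp⟩
        · obtain ⟨l1', l2', heq⟩ := hinf e he
          refine ⟨(a :: l1 ++ [u]) ++ l1', l2', ?_⟩
          have : a :: (l1 ++ u :: v :: T2 ++ [x0]) = (a :: l1 ++ [u]) ++ (v :: (T2 ++ [x0])) := by
            simp
          rw [this, heq]; simp
  -- all edges
  set es : List (I × I) := (Finset.univ.filter fun e : I × I => φ e.1 e.2).toList with hes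
  have hmemes : ∀ i j : I, φ i j → (i, j) ∈ es := by
    intro i j h; simp [hes, Finset.mem_toList, h]
  obtain ⟨T, hchain, hinf⟩ := build es (by intro e he; simpa [hes] using he) x0
  set w : List I := x0 :: (T ++ [x0]) with hw
  set N : ℕ := T.length + 1 with hN
  have hwlen : w.length = N + 1 := by simp [hw, hN]
  haveI : NeZero N := ⟨by omega⟩
  have hvlt : ∀ k : ZMod N, k.val < w.length := by
    intro k; have := ZMod.val_lt k; omega
  have hchain' : List.Chain' φ w := hchain
  have getc : ∀ {m m' : ℕ} (h : m < w.length) (h' : m' < w.length), m = m' →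
      w.get ⟨m, h⟩ = w.get ⟨m', h'⟩ := by
    rintro m m' h h' rfl; rfl
  have hget : ∀ m, m < N → ∀ (h1 : m < w.length) (h2 : m + 1 < w.length),
      φ (w.get ⟨m, h1⟩) (w.get ⟨m + 1, h2⟩) := by
    intro m hm h1 h2
    exact List.isChain_iff_getElem.mp hchain' m (by omega)
  have hw0 : ∀ h : 0 < w.length, w.get ⟨0, h⟩ = x0 := fun _ => rfl
  have hwN : ∀ h : N < w.length, w.get ⟨N, h⟩ = x0 := by
    intro h
    show (x0 :: (T ++ [x0])).get ⟨T.length + 1, h⟩ = x0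
    simp only [List.get_eq_getElem, List.getElem_cons_succ]
    exact List.getElem_concat_length rfl _
  have key : ∀ i j : I, φ i j → ∃ m, ∃ hm : m + 1 ≤ N,
      w.get ⟨m, by omega⟩ = i ∧ w.get ⟨m + 1, by omega⟩ = j := by
    intro i j hij
    obtain ⟨l1, l2, heq⟩ := hinf (i, j) (hmemes i j hij)
    have heq' : w = l1 ++ i :: j :: l2 := heq
    have hlen : w.length = l1.length + (l2.length + 2) := by simp [heq']
    refine ⟨l1.length, by omega, ?_, ?_⟩
    · simp only [List.get_eq_getElem, heq']
      rw [List.getElem_append_right (le_refl _)]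
      simp
    · simp only [List.get_eq_getElem, heq']
      rw [List.getElem_append_right (by omega : l1.length ≤ l1.length + 1)]
      simp
  set p : ZMod N → I := fun k => w.get ⟨k.val, hvlt k⟩ with hp
  have hval1 : ∀ k : ZMod N, (k + 1).val = (k.val + 1) % N := by
    intro k
    rw [ZMod.val_add, ZMod.val_one_eq_one_mod, Nat.add_mod_mod]
  have hpval : ∀ (k : ZMod N) (m : ℕ) (hm : m < w.length), k.val = m →
      p k = w.get ⟨m, hm⟩ := by
    intro k m hm hkm
    exact getc _ _ hkm
  have prop2 : ∀ k : ZMod N, φ (p k) (p (k + 1)) := by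
    intro k
    have hk := ZMod.val_lt k
    have e1 : p k = w.get ⟨k.val, hvlt k⟩ := rfl
    by_cases hc : k.val + 1 < N
    · have h1 : (k + 1).val = k.val + 1 := by rw [hval1, Nat.mod_eq_of_lt hc]
      rw [e1, hpval (k + 1) (k.val + 1) (by omega) h1]
      exact hget k.val hk _ _
    · have hkN : k.val + 1 = N := by omega
      have h1 : (k + 1).val = 0 := by rw [hval1, hkN, Nat.mod_self]
      have e2 : p (k + 1) = w.get ⟨k.val + 1, by omega⟩ :=
        (hpval (k + 1) 0 (by omega) h1).trans
          ((hw0 _).trans ((hwN (by omega)).symm.trans (getc _ _ hkN.symm)))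
      rw [e1, e2]
      exact hget k.val hk _ _
  have prop3 : ∀ i j : I, φ i j → ∃ k : ZMod N, p k = i ∧ p (k + 1) = j := by
    intro i j hij
    obtain ⟨m, hm, hi, hj⟩ := key i j hij
    have hv : ((m : ZMod N)).val = m := ZMod.val_natCast_of_lt (by omega)
    refine ⟨(m : ZMod N), (hpval _ m (by omega) hv).trans hi, ?_⟩
    by_cases hc : m + 1 < N
    · have h1 : ((m : ZMod N) + 1).val = m + 1 := by
        rw [hval1, hv, Nat.mod_eq_of_lt hc]
      exact (hpval _ (m + 1) (by omega) h1).trans hj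
    · have hmN : m + 1 = N := by omega
      have h1 : ((m : ZMod N) + 1).val = 0 := by rw [hval1, hv, hmN, Nat.mod_self]
      exact (hpval _ 0 (by omega) h1).trans
        ((hw0 _).trans (((hwN (by omega)).symm.trans (getc _ _ hmN.symm)).trans hj))
  refine ⟨N, by omega, p, ?_, prop2, prop3⟩
  intro i
  obtain ⟨j, hj⟩ := hl i
  obtain ⟨k, hk, -⟩ := prop3 i j hj
  exact ⟨k, hk⟩
end

section
/- If f is a surjective continuous map of a compact metric space X, α : X → I is a surjective locally constant map to a finite set, and f is chain transitive, then the induced relation f^α on I is transitive (every pair in I is connected by an f^α-path). -/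
lemma relPow_map {X I : Type*} (R : X → X → Prop) (S : I → I → Prop) (α : X → I)
    (h : ∀ a b, R a b → S (α a) (α b)) :
    ∀ n x y, relPow R n x y → relPow S n (α x) (α y) := by
  intro n
  induction n with
  | zero => intro x y hxy; simpa [relPow] using congrArg α hxy
  | succ n ih =>
    rintro x y ⟨b, hRb, hrest⟩
    exact ⟨α b, h _ _ hRb, ih _ _ hrest⟩

theorem chain_transitive_representation {X : Type*} [MetricSpace X] [CompactSpace X]
    {I : Type*} [Finite I]
    (f : X → X) (hf : Continuous f) (hfs : Function.Surjective f)
    (hct : ∀ ε : ℝ, 0 < ε → ∀ x y : X, ∃ n, 1 ≤ n ∧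
      relPow (fun a b => ∃ u : X, dist a u < ε ∧ dist (f u) b < ε) n x y)
    (α : X → I) (hαc : IsLocallyConstant α) (hα : Function.Surjective α) :
    ∀ i j : I, ∃ n, 1 ≤ n ∧
      relPow (fun a b => ∃ x : X, α x = a ∧ α (f x) = b) n i j := by
  -- uniform local constancy
  obtain ⟨δ, hδ, hball⟩ :
      ∃ δ > 0, ∀ x : X, ∃ i : I, Metric.ball x δ ⊆ α ⁻¹' {i} := by
    have hopen : ∀ i : I, IsOpen (α ⁻¹' {i}) := fun i => hαc.isOpen_fiber i
    have hcov : Set.univ ⊆ ⋃ i : I, α ⁻¹' {i} := by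
      intro x _; exact Set.mem_iUnion.2 ⟨α x, rfl⟩
    obtain ⟨δ, hδ, h⟩ := lebesgue_number_lemma_of_metric isCompact_univ hopen hcov
    exact ⟨δ, hδ, fun x => by simpa using h x (Set.mem_univ x)⟩
  have hconst : ∀ a b : X, dist a b < δ → α a = α b := by
    intro a b hab
    obtain ⟨i, hi⟩ := hball a
    have h1 : α a = i := hi (Metric.mem_ball_self hδ)
    have h2 : α b = i := hi (by simpa [Metric.mem_ball, dist_comm] using hab)
    rw [h1, h2]
  intro i j
  obtain ⟨x, hx⟩ := hα i
  obtain ⟨y, hy⟩ := hα j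
  obtain ⟨n, hn1, hrel⟩ := hct δ hδ x y
  refine ⟨n, hn1, ?_⟩
  have := relPow_map (fun a b => ∃ u : X, dist a u < δ ∧ dist (f u) b < δ)
    (fun a b => ∃ x : X, α x = a ∧ α (f x) = b) α ?_ n x y hrel
  · rwa [hx, hy] at this
  · rintro a b ⟨u, hau, hub⟩
    exact ⟨u, (hconst a u hau).symm, hconst (f u) b hub⟩
end

section
/- Let {p_{n+1,n} : (A_{n+1}, R_{n+1}) → (A_n, R_n)} be an inverse sequence of compact systems (surjective maps with (p × p)(R_{n+1}) = R_n) such that for every n there exists m > n with p_{m,n} ∘ R_m a function (the Shimomura condition). Then the inverse limit relation R_∞ on A_∞ is a (single-valued) surjective continuous map. -/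
/-- The bonding map `p_{n+k,n} : A (n+k) → A n` of an inverse sequence. -/
def bond {A : ℕ → Type*} (p : ∀ n, A (n + 1) → A n) : ∀ (n k : ℕ), A (n + k) → A n
  | _, 0, a => a
  | n, k + 1, a => bond p n k (p (n + k) a)

section aux
variable {A : ℕ → Type*} (p : ∀ n, A (n + 1) → A n)

theorem bond_thread {z : ∀ n, A n} (hz : ∀ n, p n (z (n + 1)) = z n) :
    ∀ n k, bond p n k (z (n + k)) = z n := by
  intro n k
  induction k with
  | zero => rfl
  | succ k ih =>
      show bond p n k (p (n + k) (z (n + k + 1))) = z n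
      rw [hz (n + k)]; exact ih

theorem heq_p {i j : ℕ} (h : i = j) (a : A (i + 1)) (a' : A (j + 1)) (ha : HEq a a') :
    HEq (p i a) (p j a') := by subst h; rw [eq_of_heq ha]

theorem p_bond : ∀ (k n : ℕ) (a : A (n + 1 + k)) (a' : A (n + (k + 1))), HEq a a' →
    p n (bond p (n + 1) k a) = bond p n (k + 1) a'
  | 0, n, a, a', h => by
      show p n a = p n a'
      rw [eq_of_heq h]
  | k + 1, n, a, a', h => by
      show p n (bond p (n + 1) k (p (n + 1 + k) a)) = bond p n (k + 1) (p (n + (k + 1)) a')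
      exact p_bond k n _ _ (heq_p p (by omega) _ _ h)

theorem exists_thread (hps : ∀ n, Function.Surjective (p n)) (n : ℕ) (b : A n) :
    ∃ z : ∀ m, A m, (∀ m, p m (z (m + 1)) = z m) ∧ z n = b := by
  classical
  obtain ⟨sec, hsec⟩ : ∃ sec : ∀ m, A m → A (m + 1), ∀ m a, p m (sec m a) = a :=
    ⟨fun m a => (hps m a).choose, fun m a => (hps m a).choose_spec⟩
  let u : ∀ m, n ≤ m → A m := fun m h =>
    Nat.leRec (motive := fun m _ => A m) b (fun k _ x => sec k x) h
  have hu_self : u n le_rfl = b := Nat.leRec_self _ _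
  have hu_succ : ∀ m (h : n ≤ m) (h2 : n ≤ m + 1), u (m + 1) h2 = sec m (u m h) :=
    fun m h _ => Nat.leRec_succ _ _ h
  have hu_irrel : ∀ {i j : ℕ} (_ : i = j) (hi : n ≤ i) (hj : n ≤ j), HEq (u i hi) (u j hj) := by
    intro i j h hi hj; subst h; rfl
  have bond_u : ∀ k m (h : n ≤ m) (h' : n ≤ m + k), bond p m k (u (m + k) h') = u m h := by
    intro k
    induction k with
    | zero => intro m h h'; rfl
    | succ k ih =>
        intro m h h'
        show bond p m k (p (m + k) (u (m + k + 1) h')) = u m h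
        rw [hu_succ (m + k) (le_trans h (Nat.le_add_right m k)) h', hsec]
        exact ih m h _
  have bond_u_step : ∀ m k (h : n ≤ m + k) (h' : n ≤ m + (k + 1)),
      bond p m (k + 1) (u (m + (k + 1)) h') = bond p m k (u (m + k) h) := by
    intro m k h h'
    show bond p m k (p (m + k) (u (m + k + 1) h')) = _
    rw [hu_succ (m + k) h h', hsec]
  refine ⟨fun m => bond p m (n + 1) (u (m + (n + 1)) (by omega)), ?_, ?_⟩
  · intro m
    have step1 : p m (bond p (m + 1) (n + 1) (u ((m + 1) + (n + 1)) (by omega))) =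
        bond p m ((n + 1) + 1) (u (m + ((n + 1) + 1)) (by omega)) :=
      p_bond p (n + 1) m _ _ (hu_irrel (by omega) _ _)
    have step2 : bond p m ((n + 1) + 1) (u (m + ((n + 1) + 1)) (by omega)) =
        bond p m (n + 1) (u (m + (n + 1)) (by omega)) :=
      bond_u_step m (n + 1) (by omega) (by omega)
    exact step1.trans step2
  · show bond p n (n + 1) (u (n + (n + 1)) (by omega)) = b
    rw [bond_u (n + 1) n le_rfl (by omega), hu_self]

end aux
theorem shimomura_limit_is_map {A : ℕ → Type*} [∀ n, MetricSpace (A n)]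
    [∀ n, CompactSpace (A n)]
    (R : ∀ n, A n → A n → Prop)
    (hRclosed : ∀ n, IsClosed {q : A n × A n | R n q.1 q.2})
    (hRl : ∀ n (a : A n), ∃ b, R n a b) (hRr : ∀ n (b : A n), ∃ a, R n a b)
    (p : ∀ n, A (n + 1) → A n)
    (hpc : ∀ n, Continuous (p n)) (hps : ∀ n, Function.Surjective (p n))
    (hcompat : ∀ n (a b : A n), R n a b ↔
      ∃ a' b' : A (n + 1), R (n + 1) a' b' ∧ p n a' = a ∧ p n b' = b)
    (hshim : ∀ n, ∃ k, 1 ≤ k ∧ ∀ a b c : A (n + k),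
      R (n + k) a b → R (n + k) a c → bond p n k b = bond p n k c) :
    ∃ F : {z : ∀ n, A n // ∀ n, p n (z (n + 1)) = z n} →
          {z : ∀ n, A n // ∀ n, p n (z (n + 1)) = z n},
      Continuous F ∧ Function.Surjective F ∧
        ∀ z w : {z : ∀ n, A n // ∀ n, p n (z (n + 1)) = z n},
          (∀ n, R n (z.1 n) (w.1 n)) ↔ F z = w := by
  classical
  have hLclosed : IsClosed {z : ∀ n, A n | ∀ n, p n (z (n + 1)) = z n} := by
    have heq : {z : ∀ n, A n | ∀ n, p n (z (n + 1)) = z n} =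
        ⋂ n, {z : ∀ n, A n | p n (z (n + 1)) = z n} := by
      ext z; simp [Set.mem_iInter]
    rw [heq]
    exact isClosed_iInter fun n =>
      isClosed_eq ((hpc n).comp (continuous_apply (n + 1))) (continuous_apply n)
  haveI hLcpt : CompactSpace {z : ∀ n, A n // ∀ n, p n (z (n + 1)) = z n} :=
    isCompact_iff_compactSpace.mp hLclosed.isCompact
  -- totality
  have total : ∀ z : {z : ∀ n, A n // ∀ n, p n (z (n + 1)) = z n},
      ∃ w : {z : ∀ n, A n // ∀ n, p n (z (n + 1)) = z n}, ∀ n, R n (z.1 n) (w.1 n) := by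
    intro z
    set C : ℕ → Set {z : ∀ n, A n // ∀ n, p n (z (n + 1)) = z n} :=
      fun n => {w | R n (z.1 n) (w.1 n)} with hC
    have hdec : ∀ n, C (n + 1) ⊆ C n := fun n w hw =>
      (hcompat n (z.1 n) (w.1 n)).mpr ⟨z.1 (n + 1), w.1 (n + 1), hw, z.2 n, w.2 n⟩
    have hne : ∀ n, (C n).Nonempty := by
      intro n
      obtain ⟨b, hb⟩ := hRl n (z.1 n)
      obtain ⟨t, ht, htn⟩ := exists_thread p hps n b
      exact ⟨⟨t, ht⟩, show R n (z.1 n) (t n) from htn ▸ hb⟩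
    have hcl : ∀ n, IsClosed (C n) := by
      intro n
      exact (hRclosed n).preimage
        (continuous_const.prodMk ((continuous_apply n).comp continuous_subtype_val))
    obtain ⟨w, hw⟩ := IsCompact.nonempty_iInter_of_sequence_nonempty_isCompact_isClosed
      C hdec hne (hcl 0).isCompact hcl
    exact ⟨w, fun n => Set.mem_iInter.mp hw n⟩
  have onto : ∀ w : {z : ∀ n, A n // ∀ n, p n (z (n + 1)) = z n},
      ∃ z : {z : ∀ n, A n // ∀ n, p n (z (n + 1)) = z n}, ∀ n, R n (z.1 n) (w.1 n) := by
    intro w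
    set C : ℕ → Set {z : ∀ n, A n // ∀ n, p n (z (n + 1)) = z n} :=
      fun n => {z | R n (z.1 n) (w.1 n)} with hC
    have hdec : ∀ n, C (n + 1) ⊆ C n := fun n z hz =>
      (hcompat n (z.1 n) (w.1 n)).mpr ⟨z.1 (n + 1), w.1 (n + 1), hz, z.2 n, w.2 n⟩
    have hne : ∀ n, (C n).Nonempty := by
      intro n
      obtain ⟨a, ha⟩ := hRr n (w.1 n)
      obtain ⟨t, ht, htn⟩ := exists_thread p hps n a
      exact ⟨⟨t, ht⟩, show R n (t n) (w.1 n) from htn ▸ ha⟩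
    have hcl : ∀ n, IsClosed (C n) := by
      intro n
      exact (hRclosed n).preimage
        (((continuous_apply n).comp continuous_subtype_val).prodMk continuous_const)
    obtain ⟨z, hz⟩ := IsCompact.nonempty_iInter_of_sequence_nonempty_isCompact_isClosed
      C hdec hne (hcl 0).isCompact hcl
    exact ⟨z, fun n => Set.mem_iInter.mp hz n⟩
  -- uniqueness
  have uniq : ∀ z w w' : {z : ∀ n, A n // ∀ n, p n (z (n + 1)) = z n},
      (∀ n, R n (z.1 n) (w.1 n)) → (∀ n, R n (z.1 n) (w'.1 n)) → w = w' := by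
    intro z w w' h h'
    apply Subtype.ext; funext n
    obtain ⟨k, -, hk⟩ := hshim n
    have hb := hk (z.1 (n + k)) (w.1 (n + k)) (w'.1 (n + k)) (h (n + k)) (h' (n + k))
    rwa [bond_thread p w.2, bond_thread p w'.2] at hb
  choose F hF using total
  have hiff : ∀ z w : {z : ∀ n, A n // ∀ n, p n (z (n + 1)) = z n},
      (∀ n, R n (z.1 n) (w.1 n)) ↔ F z = w := by
    intro z w
    constructor
    · intro h; exact uniq z (F z) w (hF z) h
    · rintro rfl; exact hF z
  have hsurj : Function.Surjective F := by
    intro w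
    obtain ⟨z, hz⟩ := onto w
    exact ⟨z, (hiff z w).mp hz⟩
  -- continuity via closed graph
  set G : Set ({z : ∀ n, A n // ∀ n, p n (z (n + 1)) = z n} ×
      {z : ∀ n, A n // ∀ n, p n (z (n + 1)) = z n}) :=
    {q | ∀ n, R n (q.1.1 n) (q.2.1 n)} with hG
  have hGclosed : IsClosed G := by
    have heq : G = ⋂ n, (fun q : {z : ∀ n, A n // ∀ n, p n (z (n + 1)) = z n} ×
        {z : ∀ n, A n // ∀ n, p n (z (n + 1)) = z n} => (q.1.1 n, q.2.1 n)) ⁻¹'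
        {q : A n × A n | R n q.1 q.2} := by
      ext q; simp [hG, Set.mem_iInter]
    rw [heq]
    refine isClosed_iInter fun n => (hRclosed n).preimage ?_
    exact (((continuous_apply n).comp continuous_subtype_val).comp continuous_fst).prodMk
      (((continuous_apply n).comp continuous_subtype_val).comp continuous_snd)
  haveI : CompactSpace G := isCompact_iff_compactSpace.mp hGclosed.isCompact
  let g : G → {z : ∀ n, A n // ∀ n, p n (z (n + 1)) = z n} := fun q => q.1.1
  have hgbij : Function.Bijective g := by
    constructor
    · rintro ⟨⟨z, w⟩, hq⟩ ⟨⟨z', w'⟩, hq'⟩ hzz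
      have hz : z = z' := hzz
      subst hz
      have : w = w' := uniq z w w' hq hq'
      subst this; rfl
    · intro z
      exact ⟨⟨(z, F z), hF z⟩, rfl⟩
  let e := Equiv.ofBijective g hgbij
  have hgc : Continuous g := continuous_fst.comp continuous_subtype_val
  have hec : Continuous e := hgc
  let homeo := hec.homeoOfEquivCompactToT2
  have hFeq : F = fun z => (homeo.symm z).1.2 := by
    funext z
    have h1 : (homeo.symm z).1.1 = z := e.apply_symm_apply z
    have h2 : ∀ n, R n ((homeo.symm z).1.1.1 n)
        ((homeo.symm z).1.2.1 n) := (homeo.symm z).2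
    rw [h1] at h2
    exact (hiff z _).mp h2
  refine ⟨F, ?_, hsurj, hiff⟩
  rw [hFeq]
  exact continuous_snd.comp (continuous_subtype_val.comp homeo.continuous_symm)
end

section
/- Let {p_{n+1,n} : (A_{n+1}, R_{n+1}) → (A_n, R_n)} be an inverse sequence of systems with each A_n finite, and suppose the inverse limit relation R_∞ is a function. Then the sequence satisfies the Shimomura condition: for every n there exists m > n such that p_{m,n} ∘ R_m is a function. -/
lemma iInter_nonempty_of_antitone {α : Type*} (hfin : Finite α) (C : ℕ → Set α)
    (hdec : ∀ j, C (j + 1) ⊆ C j) (hne : ∀ j, (C j).Nonempty) :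
    (⋂ j, C j).Nonempty := by
  haveI := hfin
  have hmono : ∀ i j, i ≤ j → C j ⊆ C i := by
    intro i j hij
    induction hij with
    | refl => exact subset_rfl
    | step h ih => exact (hdec _).trans ih
  obtain ⟨j0, hj0⟩ : ∃ j0, ∀ j, (C j0).ncard ≤ (C j).ncard := by
    have hrange : (Set.range fun j => (C j).ncard).Nonempty := ⟨_, ⟨0, rfl⟩⟩
    obtain ⟨j0, hj0⟩ := Nat.sInf_mem hrange
    exact ⟨j0, fun j => le_of_eq_of_le hj0 (Nat.sInf_le ⟨j, rfl⟩)⟩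
  have hstable : ∀ j, C j0 ⊆ C j := by
    intro j
    rcases le_total j j0 with h | h
    · exact hmono j j0 h
    · have heq := Set.eq_of_subset_of_ncard_le (hmono j0 j h) (hj0 j) (Set.toFinite _)
      rw [heq]
  obtain ⟨x, hx⟩ := hne j0
  exact ⟨x, Set.mem_iInter.2 fun j => hstable j hx⟩

lemma exists_seq_limit {S : ℕ → Type*} (hfin : ∀ m, Finite (S m))
    (hne : ∀ m, Nonempty (S m)) (f : ∀ m, S (m + 1) → S m) :
    ∃ u : ∀ m, S m, ∀ m, f m (u (m + 1)) = u m := by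
  classical
  let C : ℕ → ∀ m, Set (S m) := fun j =>
    Nat.rec (motive := fun _ => ∀ m, Set (S m)) (fun _ => Set.univ)
      (fun _ ih m => f m '' ih (m + 1)) j
  have Cne : ∀ j m, (C j m).Nonempty := by
    intro j
    induction j with
    | zero => exact fun m => ⟨(hne m).some, trivial⟩
    | succ j ih => exact fun m => (ih (m + 1)).image _
  have Cdec : ∀ j m, C (j + 1) m ⊆ C j m := by
    intro j
    induction j with
    | zero => exact fun m => Set.subset_univ _
    | succ j ih => exact fun m => Set.image_mono (ih (m + 1))
  have Lne : ∀ m, (⋂ j, C j m).Nonempty := fun m =>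
    iInter_nonempty_of_antitone (hfin m) (fun j => C j m) (fun j => Cdec j m)
      (fun j => Cne j m)
  have key : ∀ m, ∀ x ∈ (⋂ j, C j m), ∃ y, y ∈ (⋂ j, C j (m + 1)) ∧ f m y = x := by
    intro m x hx
    have Dne : ∀ j, ({y | y ∈ C j (m + 1) ∧ f m y = x} : Set (S (m + 1))).Nonempty := by
      intro j
      obtain ⟨y, hy, hyx⟩ : x ∈ C (j + 1) m := Set.mem_iInter.1 hx (j + 1)
      exact ⟨y, hy, hyx⟩
    have Ddec : ∀ j, ({y | y ∈ C (j + 1) (m + 1) ∧ f m y = x} : Set (S (m + 1))) ⊆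
        {y | y ∈ C j (m + 1) ∧ f m y = x} := fun j y hy => ⟨Cdec j (m + 1) hy.1, hy.2⟩
    obtain ⟨y, hy⟩ := iInter_nonempty_of_antitone (hfin (m + 1)) _ Ddec Dne
    have hy' := Set.mem_iInter.1 hy
    exact ⟨y, Set.mem_iInter.2 fun j => (hy' j).1, (hy' 0).2⟩
  choose g hg1 hg2 using key
  let v : ∀ m, {x : S m // x ∈ ⋂ j, C j m} := fun m =>
    Nat.rec ⟨(Lne 0).choose, (Lne 0).choose_spec⟩
      (fun m ih => ⟨g m ih.1 ih.2, hg1 m ih.1 ih.2⟩) m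
  exact ⟨fun m => (v m).1, fun m => hg2 m (v m).1 (v m).2⟩

theorem limit_map_implies_shimomura {A : ℕ → Type*} [∀ n, Finite (A n)]
    [∀ n, Nonempty (A n)]
    (R : ∀ n, A n → A n → Prop)
    (hRl : ∀ n (a : A n), ∃ b, R n a b) (hRr : ∀ n (b : A n), ∃ a, R n a b)
    (p : ∀ n, A (n + 1) → A n)
    (hps : ∀ n, Function.Surjective (p n))
    (hcompat : ∀ n (a b : A n), R n a b ↔
      ∃ a' b' : A (n + 1), R (n + 1) a' b' ∧ p n a' = a ∧ p n b' = b)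
    (hfun : ∀ z w w' : {z : ∀ n, A n // ∀ n, p n (z (n + 1)) = z n},
      (∀ n, R n (z.1 n) (w.1 n)) → (∀ n, R n (z.1 n) (w'.1 n)) → w = w') :
    ∀ n, ∃ k, 1 ≤ k ∧ ∀ a b c : A (n + k),
      R (n + k) a b → R (n + k) a c → bond p n k b = bond p n k c := by
  intro n
  by_contra hcon
  push_neg at hcon
  have hcon' : ∀ k, 1 ≤ k → ∃ a b c : A (n + k),
      R (n + k) a b ∧ R (n + k) a c ∧ bond p n k b ≠ bond p n k c := by
    intro k hk
    obtain ⟨a, b, c, h1, h2, h3⟩ := hcon k hk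
    exact ⟨a, b, c, h1, h2, h3⟩
  -- the system of V's
  set S : ℕ → Type _ := fun m => {t : A m × A m × A m // R m t.1 t.2.1 ∧ R m t.1 t.2.2 ∧
      ∀ k (h : m = n + k), bond p n k (h ▸ t.2.1) ≠ bond p n k (h ▸ t.2.2)} with hS
  have hfwd : ∀ m (a b : A (m + 1)), R (m + 1) a b → R m (p m a) (p m b) :=
    fun m a b h => (hcompat m _ _).2 ⟨a, b, h, rfl, rfl⟩
  let fdef : ∀ m, S (m + 1) → S m := fun m t =>
    ⟨(p m t.1.1, p m t.1.2.1, p m t.1.2.2), hfwd m _ _ t.2.1, hfwd m _ _ t.2.2.1, by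
      intro k hk
      subst hk
      exact t.2.2.2 (k + 1) rfl⟩
  have hfin : ∀ m, Finite (S m) :=
    fun m => Finite.of_injective (Subtype.val : S m → A m × A m × A m) Subtype.val_injective
  have hne1 : ∀ k, 1 ≤ k → Nonempty (S (n + k)) := by
    intro k hk
    obtain ⟨a, b, c, h1, h2, h3⟩ := hcon' k hk
    refine ⟨⟨(a, b, c), h1, h2, ?_⟩⟩
    intro k' hk'
    have hkk : k' = k := by omega
    subst hkk
    exact h3
  have hdown : ∀ m, Nonempty (S (m + 1)) → Nonempty (S m) := fun m h => ⟨fdef m h.some⟩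
  have hne : ∀ m, Nonempty (S m) := by
    have claim : ∀ d m, Nonempty (S (m + d)) → Nonempty (S m) := by
      intro d
      induction d with
      | zero => exact fun m h => h
      | succ d ih => exact fun m h => ih m (hdown (m + d) h)
    intro m
    have h1 : Nonempty (S (n + (m + 1))) := hne1 (m + 1) (by omega)
    have e : m + (n + 1) = n + (m + 1) := by omega
    exact claim (n + 1) m (by rw [e]; exact h1)
  obtain ⟨u, hu⟩ := exists_seq_limit hfin hne fdef
  have hz : ∀ m, p m ((u (m + 1)).1.1) = (u m).1.1 :=
    fun m => congrArg (fun t => t.1.1) (hu m)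
  have hw : ∀ m, p m ((u (m + 1)).1.2.1) = (u m).1.2.1 :=
    fun m => congrArg (fun t => t.1.2.1) (hu m)
  have hw' : ∀ m, p m ((u (m + 1)).1.2.2) = (u m).1.2.2 :=
    fun m => congrArg (fun t => t.1.2.2) (hu m)
  have heq := hfun ⟨fun m => (u m).1.1, hz⟩ ⟨fun m => (u m).1.2.1, hw⟩
    ⟨fun m => (u m).1.2.2, hw'⟩ (fun m => (u m).2.1) (fun m => (u m).2.2.1)
  have heqn : (u n).1.2.1 = (u n).1.2.2 :=
    congrArg (fun w : {z : ∀ m, A m // ∀ m, p m (z (m + 1)) = z m} => w.1 n) heq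
  exact (u n).2.2.2 0 rfl heqn
end

section
/- Let f be a homeomorphism of a compact metric space X that is not periodic (fⁿ ≠ id for all n ≥ 1). Then for every M ≥ 1 the pointed loop (1-M wedge) is a factor of (X, f): there exists a surjective locally constant map α : X → {1, …, M} with f^α equal to the relation {(i,i+1) : 1 ≤ i < M} ∪ {(1,1), (M,1)}. -/
/-- The pointed loop (1-M wedge) of length `M` on `{1, …, M} ⊆ ℕ`. -/
def pointedLoop (M : ℕ) (i j : ℕ) : Prop :=
  (1 ≤ i ∧ i < M ∧ j = i + 1) ∨ (i = 1 ∧ j = 1) ∨ (i = M ∧ j = 1)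

theorem nonperiodic_represents_pointed_loop {X : Type*} [TopologicalSpace X]
    [CompactSpace X] [TopologicalSpace.MetrizableSpace X] [TotallyDisconnectedSpace X] [Nonempty X]
    (hperf : Perfect (Set.univ : Set X))
    (f : X ≃ₜ X) (hnp : ∀ n : ℕ, 1 ≤ n → (⇑f)^[n] ≠ id) :
    ∀ M : ℕ, 1 ≤ M → ∃ α : X → ℕ,
      IsLocallyConstant α ∧
      (∀ x : X, 1 ≤ α x ∧ α x ≤ M) ∧
      (∀ i : ℕ, 1 ≤ i → i ≤ M → ∃ x : X, α x = i) ∧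
      (∀ i j : ℕ, (∃ x : X, α x = i ∧ α (f x) = j) ↔ pointedLoop M i j) := by
  classical
  intro M hM
  -- Step 1: find a point whose orbit does not return within `M+1` steps.
  have hx0 : ∃ x0 : X, ∀ k, 1 ≤ k → k ≤ M + 1 → (⇑f)^[k] x0 ≠ x0 := by
    by_contra h
    push_neg at h
    have hN : (⇑f)^[Nat.factorial (M + 1)] = id := by
      funext x
      obtain ⟨k, hk1, hk2, hfix⟩ := h x
      obtain ⟨c, hc⟩ := Nat.dvd_factorial hk1 hk2
      rw [hc, Function.iterate_mul]
      exact Function.iterate_fixed hfix c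
    exact hnp _ (Nat.factorial_pos _) hN
  obtain ⟨x0, hx0⟩ := hx0
  haveI : TotallySeparatedSpace X := loc_compact_t2_tot_disc_iff_tot_sep.mp inferInstance
  -- Step 2: clopen neighborhoods separating `x0` from its iterates.
  have hW : ∀ k : ℕ, ∃ V : Set X, IsClopen V ∧ x0 ∈ V ∧
      (1 ≤ k → k ≤ M + 1 → (⇑f)^[k] x0 ∉ V) := by
    intro k
    by_cases hk : 1 ≤ k ∧ k ≤ M + 1
    · obtain ⟨V, hV, hx, hy⟩ := exists_isClopen_of_totally_separated (Ne.symm (hx0 k hk.1 hk.2))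
      exact ⟨V, hV, hx, fun _ _ => hy⟩
    · exact ⟨Set.univ, isClopen_univ, trivial, fun h1 h2 => absurd ⟨h1, h2⟩ hk⟩
  choose W hWclopen hWx0 hWnot using hW
  set U : Set X := ⋂ k ∈ Finset.Icc 1 (M + 1), (W k ∩ (⇑f)^[k] ⁻¹' (W k)ᶜ) with hU
  have hUclopen : IsClopen U := isClopen_biInter_finset fun k _ =>
    (hWclopen k).inter (((hWclopen k).compl).preimage (f.continuous.iterate k))
  have hUx0 : x0 ∈ U := by
    rw [hU]
    refine Set.mem_iInter₂.mpr fun k hk => ?_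
    simp only [Finset.mem_Icc] at hk
    exact ⟨hWx0 k, hWnot k hk.1 hk.2⟩
  have disj : ∀ k, 1 ≤ k → k ≤ M + 1 → ∀ x ∈ U, (⇑f)^[k] x ∉ U := by
    intro k h1 h2 x hx hfx
    have hk : k ∈ Finset.Icc 1 (M + 1) := Finset.mem_Icc.mpr ⟨h1, h2⟩
    exact (Set.mem_iInter₂.mp hx k hk).2 (Set.mem_iInter₂.mp hfx k hk).1
  -- basic iterate identities
  have hfs : ∀ n (x : X), (⇑f)^[n] ((⇑f.symm)^[n] x) = x := by
    intro n
    induction n with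
    | zero => intro x; rfl
    | succ n ih =>
      intro x
      rw [Function.iterate_succ_apply f, Function.iterate_succ_apply' (⇑f.symm),
        Homeomorph.apply_symm_apply]
      exact ih x
  have hsf : ∀ n (x : X), (⇑f.symm)^[n] ((⇑f)^[n] x) = x := by
    intro n
    induction n with
    | zero => intro x; rfl
    | succ n ih =>
      intro x
      rw [Function.iterate_succ_apply (⇑f.symm), Function.iterate_succ_apply' f,
        Homeomorph.symm_apply_apply]
      exact ih x
  have hshift : ∀ (k : ℕ) (x : X), (⇑f.symm)^[k + 1] (f x) = (⇑f.symm)^[k] x := by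
    intro k x
    rw [Function.iterate_succ_apply (⇑f.symm), Homeomorph.symm_apply_apply]
  have hcomp : ∀ k t (u : X), k ≤ t → (⇑f.symm)^[k] ((⇑f)^[t] u) = (⇑f)^[t - k] u := by
    intro k t u hkt
    have h1 : (⇑f)^[t] u = (⇑f)^[k] ((⇑f)^[t - k] u) := by
      rw [← Function.iterate_add_apply]
      congr 1
      omega
    rw [h1, hsf]
  have hmem' : ∀ s, 1 ≤ s → s ≤ M + 1 → ∀ u ∈ U, (⇑f.symm)^[s] u ∉ U := by
    intro s h1 h2 u hu hmem
    exact disj s h1 h2 _ hmem (by rw [hfs]; exact hu)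
  -- a helper for rewriting the value function along equal points
  have hcongr : ∀ {a b : X}, a = b →
      (1 + ∑ k ∈ Finset.Ico 1 M, if (⇑f.symm)^[k] a ∈ U then k else 0) =
      (1 + ∑ k ∈ Finset.Ico 1 M, if (⇑f.symm)^[k] b ∈ U then k else 0) := by
    intro a b h
    rw [h]
  -- at most one index can witness membership
  have huniq : ∀ (x : X), ∀ k ∈ Finset.Ico 1 M, ∀ j ∈ Finset.Ico 1 M,
      (⇑f.symm)^[k] x ∈ U → (⇑f.symm)^[j] x ∈ U → k = j := by
    intro x k hk j hj hku hju
    by_contra hne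
    wlog hlt : k < j generalizing k j
    · exact this j hj k hk hju hku (Ne.symm hne) (by omega)
    simp only [Finset.mem_Ico] at hk hj
    have key : (⇑f)^[j - k] ((⇑f.symm)^[j] x) = (⇑f.symm)^[k] x := by
      have h1 : (⇑f.symm)^[j] x = (⇑f.symm)^[j - k] ((⇑f.symm)^[k] x) := by
        rw [← Function.iterate_add_apply]
        congr 1
        omega
      rw [h1, hfs]
    have := disj (j - k) (by omega) (by omega) _ hju
    rw [key] at this
    exact this hku
  -- value computations
  have hval : ∀ (x : X) (k : ℕ), k ∈ Finset.Ico 1 M → (⇑f.symm)^[k] x ∈ U →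
      (1 + ∑ m ∈ Finset.Ico 1 M, if (⇑f.symm)^[m] x ∈ U then m else 0) = 1 + k := by
    intro x k hk hku
    congr 1
    rw [Finset.sum_eq_single_of_mem k hk]
    · simp [hku]
    · intro j hj hne
      by_cases hju : (⇑f.symm)^[j] x ∈ U
      · exact absurd (huniq x j hj k hk hju hku) hne
      · simp [hju]
  have hval1 : ∀ (x : X), (∀ k ∈ Finset.Ico 1 M, (⇑f.symm)^[k] x ∉ U) →
      (1 + ∑ m ∈ Finset.Ico 1 M, if (⇑f.symm)^[m] x ∈ U then m else 0) = 1 := by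
    intro x hx
    have h0 : (∑ m ∈ Finset.Ico 1 M, if (⇑f.symm)^[m] x ∈ U then m else 0) = 0 :=
      Finset.sum_eq_zero fun j hj => by simp [hx j hj]
    rw [h0]
  -- values along the orbit of a point of U
  have horb1 : ∀ t, t < M → ∀ u ∈ U,
      (1 + ∑ m ∈ Finset.Ico 1 M, if (⇑f.symm)^[m] ((⇑f)^[t] u) ∈ U then m else 0) = t + 1 := by
    intro t ht u hu
    rcases Nat.eq_zero_or_pos t with h0 | hpos
    · subst h0
      rw [hval1]
      intro k hk
      simp only [Finset.mem_Ico] at hk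
      simp only [Function.iterate_zero_apply]
      exact hmem' k hk.1 (by omega) u hu
    · rw [hval ((⇑f)^[t] u) t (Finset.mem_Ico.mpr ⟨hpos, ht⟩) (by rw [hsf]; exact hu)]
      omega
  have horb2 : ∀ t, M ≤ t → t ≤ M + 1 → ∀ u ∈ U,
      (1 + ∑ m ∈ Finset.Ico 1 M, if (⇑f.symm)^[m] ((⇑f)^[t] u) ∈ U then m else 0) = 1 := by
    intro t h1 h2 u hu
    apply hval1
    intro k hk
    simp only [Finset.mem_Ico] at hk
    rw [hcomp k t u (by omega)]
    exact disj (t - k) (by omega) (by omega) u hu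
  -- dichotomy for the value at an arbitrary point
  have hinv : ∀ x : X,
      ((1 + ∑ m ∈ Finset.Ico 1 M, if (⇑f.symm)^[m] x ∈ U then m else 0) = 1 ∧
        ∀ k ∈ Finset.Ico 1 M, (⇑f.symm)^[k] x ∉ U) ∨
      (∃ k ∈ Finset.Ico 1 M, (⇑f.symm)^[k] x ∈ U ∧
        (1 + ∑ m ∈ Finset.Ico 1 M, if (⇑f.symm)^[m] x ∈ U then m else 0) = k + 1) := by
    intro x
    by_cases h : ∃ k ∈ Finset.Ico 1 M, (⇑f.symm)^[k] x ∈ U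
    · obtain ⟨k, hk, hku⟩ := h
      exact Or.inr ⟨k, hk, hku, by rw [hval x k hk hku]; omega⟩
    · push_neg at h
      exact Or.inl ⟨hval1 x h, h⟩
  refine ⟨fun x => 1 + ∑ k ∈ Finset.Ico 1 M, if (⇑f.symm)^[k] x ∈ U then k else 0,
    ?_, ?_, ?_, ?_⟩
  · -- locally constant
    have hterm : ∀ a : ℕ, IsLocallyConstant
        (fun x : X => if (⇑f.symm)^[a] x ∈ U then a else 0) := by
      intro a
      have hind : IsLocallyConstant (fun y : X => if y ∈ U then a else 0) := by
        intro s
        have hpre : (fun y : X => if y ∈ U then a else 0) ⁻¹' s =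
            (U ∩ (if a ∈ s then Set.univ else ∅)) ∪
            (Uᶜ ∩ (if (0 : ℕ) ∈ s then Set.univ else ∅)) := by
          ext y
          by_cases hy : y ∈ U <;> by_cases has : a ∈ s <;> by_cases h0s : (0 : ℕ) ∈ s <;>
            simp [hy, has, h0s]
        rw [hpre]
        refine (hUclopen.isOpen.inter ?_).union (hUclopen.compl.isOpen.inter ?_) <;>
          split_ifs <;> simp
      exact hind.comp_continuous (f.symm.continuous.iterate a)
    have hsum : ∀ s : Finset ℕ, IsLocallyConstant
        (fun x : X => ∑ k ∈ s, if (⇑f.symm)^[k] x ∈ U then k else 0) := by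
      intro s
      induction s using Finset.induction with
      | empty => simp only [Finset.sum_empty]; exact IsLocallyConstant.const (X := X) (0 : ℕ)
      | @insert a s hns ih =>
        have heq : (fun x : X => ∑ k ∈ insert a s, if (⇑f.symm)^[k] x ∈ U then k else 0) =
            fun x : X => (if (⇑f.symm)^[a] x ∈ U then a else 0) +
              ∑ k ∈ s, if (⇑f.symm)^[k] x ∈ U then k else 0 := by
          funext x
          rw [Finset.sum_insert hns]
        rw [heq]
        exact (hterm a).comp₂ ih (· + ·)
    exact (IsLocallyConstant.const (X := X) (1 : ℕ)).comp₂ (hsum (Finset.Ico 1 M)) (· + ·)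
  · -- bounds
    intro x
    rcases hinv x with ⟨h1, _⟩ | ⟨k, hk, _, hk1⟩
    · constructor
      · exact Nat.le_add_right 1 _
      · simp only []
        omega
    · simp only [Finset.mem_Ico] at hk
      constructor
      · exact Nat.le_add_right 1 _
      · simp only []
        omega
  · -- surjectivity
    intro i h1 h2
    refine ⟨(⇑f)^[i - 1] x0, ?_⟩
    have := horb1 (i - 1) (by omega) x0 hUx0
    simp only []
    omega
  · -- edges
    intro i j
    constructor
    · rintro ⟨x, hi, hj⟩
      simp only [] at hi hj
      rcases hinv x with ⟨h1, hnone⟩ | ⟨k, hk, hku, hkv⟩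
      · -- α x = 1
        by_cases hxU : x ∈ U
        · by_cases hM2 : 2 ≤ M
          · have h2 := horb1 1 (by omega) x hxU
            have hfx : (⇑f)^[1] x = f x := congrFun (Function.iterate_one ⇑f) x
            rw [hcongr hfx] at h2
            simp only [pointedLoop]
            omega
          · have hj1 : (1 + ∑ m ∈ Finset.Ico 1 M,
                if (⇑f.symm)^[m] (f x) ∈ U then m else 0) = 1 := by
              apply hval1
              intro k hk
              simp only [Finset.mem_Ico] at hk
              omega
            simp only [pointedLoop]
            omega
        · have hj1 : (1 + ∑ m ∈ Finset.Ico 1 M,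
              if (⇑f.symm)^[m] (f x) ∈ U then m else 0) = 1 := by
            apply hval1
            intro k hk
            simp only [Finset.mem_Ico] at hk
            have hkk : k - 1 + 1 = k := by omega
            rw [← hkk, hshift]
            rcases Nat.eq_zero_or_pos (k - 1) with h0 | hpos
            · rw [h0]
              simpa using hxU
            · exact hnone (k - 1) (Finset.mem_Ico.mpr ⟨hpos, by omega⟩)
          simp only [pointedLoop]
          omega
      · -- α x = k + 1
        simp only [Finset.mem_Ico] at hk
        have hfx : (⇑f)^[k + 1] ((⇑f.symm)^[k] x) = f x := by
          rw [Function.iterate_succ_apply', hfs]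
        rcases lt_or_ge (k + 1) M with hlt | hge
        · have h2 := horb1 (k + 1) hlt _ hku
          rw [hcongr hfx] at h2
          simp only [pointedLoop]
          omega
        · have h2 := horb2 (k + 1) hge (by omega) _ hku
          rw [hcongr hfx] at h2
          simp only [pointedLoop]
          omega
    · intro hpl
      simp only [pointedLoop] at hpl
      rcases hpl with ⟨h1, h2, h3⟩ | ⟨h1, h2⟩ | ⟨h1, h2⟩
      · refine ⟨(⇑f)^[i - 1] x0, ?_, ?_⟩
        · have := horb1 (i - 1) (by omega) x0 hUx0
          simp only []
          omega
        · have h4 : f ((⇑f)^[i - 1] x0) = (⇑f)^[i - 1 + 1] x0 :=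
            (Function.iterate_succ_apply' (⇑f) (i - 1) x0).symm
          have := horb1 (i - 1 + 1) (by omega) x0 hUx0
          simp only []
          rw [hcongr h4]
          omega
      · refine ⟨(⇑f)^[M] x0, ?_, ?_⟩
        · have := horb2 M le_rfl (by omega) x0 hUx0
          simp only []
          omega
        · have h4 : f ((⇑f)^[M] x0) = (⇑f)^[M + 1] x0 :=
            (Function.iterate_succ_apply' (⇑f) M x0).symm
          have := horb2 (M + 1) (by omega) le_rfl x0 hUx0
          simp only []
          rw [hcongr h4]
          omega
      · refine ⟨(⇑f)^[M - 1] x0, ?_, ?_⟩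
        · have := horb1 (M - 1) (by omega) x0 hUx0
          simp only []
          omega
        · have h4 : f ((⇑f)^[M - 1] x0) = (⇑f)^[M - 1 + 1] x0 :=
            (Function.iterate_succ_apply' (⇑f) (M - 1) x0).symm
          have := horb2 (M - 1 + 1) (by omega) (by omega) x0 hUx0
          simp only []
          rw [hcongr h4]
          omega
end
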